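/- Exton's generating relation (terminating/polynomial form): for real d, y, any sequence (A_m) of reals, and real x with |x| < 1, assuming all series converge absolutely, Σ_{n≥0} [(d)_n (d+1/2)_n / ((1/2)_n n!)] x^{2n} Σ_{m=0}^{n} A_m (−n)_m (−n+1/2)_m / m! · y^m = (1/2)(1+x)^{-2d} Σ_{n≥0} A_n (d)_n (d+1/2)_n / n! · (x² y/(1+x)²)^n + (1/2)(1−x)^{-2d} Σ_{n≥0} A_n (d)_n (d+1/2)_n / n! · (x² y/(1−x)²)^n. -/

import Mathlib

open Finset

/-- Pochhammer (rising factorial) for real `a`. -/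
noncomputable def poch (a : ℝ) (n : ℕ) : ℝ := (ascPochhammer ℝ n).eval a

section ExtonAux
open Filter

lemma poch_zero (a : ℝ) : poch a 0 = 1 := by simp [poch]

lemma poch_succ (a : ℝ) (n : ℕ) : poch a (n + 1) = poch a n * (a + n) := by
  simp [poch, ascPochhammer_succ_right, Polynomial.eval_mul]

lemma poch_succ_left (a : ℝ) (n : ℕ) : poch a (n + 1) = a * poch (a + 1) n := by
  simp [poch, ascPochhammer_succ_left, Polynomial.eval_mul, Polynomial.eval_comp]

lemma poch_one (n : ℕ) : poch 1 n = n.factorial := by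
  induction n with
  | zero => simp [poch_zero]
  | succ n ih => rw [poch_succ, ih, Nat.factorial_succ]; push_cast; ring

lemma poch_pos {a : ℝ} (ha : 0 < a) (n : ℕ) : 0 < poch a n := by
  induction n with
  | zero => simp [poch_zero]
  | succ n ih => rw [poch_succ]; positivity

lemma poch_dup (a : ℝ) (n : ℕ) :
    4 ^ n * poch a n * poch (a + 1/2) n = poch (2 * a) (2 * n) := by
  induction n with
  | zero => simp [poch_zero]
  | succ n ih =>
    have : 2 * (n + 1) = (2 * n + 1) + 1 := by ring
    rw [this, poch_succ, poch_succ, poch_succ, poch_succ]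
    push_cast
    linear_combination (2*a+2*(n:ℝ))*(2*a+2*(n:ℝ)+1)*ih

lemma poch_add (a : ℝ) (n m : ℕ) : poch a (n + m) = poch a n * poch (a + n) m := by
  induction m with
  | zero => simp [poch_zero]
  | succ m ih =>
    have : n + (m + 1) = (n + m) + 1 := by ring
    rw [this, poch_succ, poch_succ, ih]
    push_cast; ring

lemma poch_neg_eq_zero {k m : ℕ} (h : k < m) : poch (-(k : ℝ)) m = 0 := by
  have h1 : poch (-(k : ℝ)) (k + 1) = 0 := by
    rw [poch_succ]; simp
  have : m = (k + 1) + (m - (k + 1)) := by omega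
  rw [this, poch_add, h1, zero_mul]

lemma poch_neg {k m : ℕ} (h : m ≤ k) :
    poch (-(k : ℝ)) m * (k - m).factorial = (-1) ^ m * k.factorial := by
  induction m with
  | zero => simp [poch_zero]
  | succ m ih =>
    have hm : m ≤ k := by omega
    have hkm : k - m = (k - (m + 1)) + 1 := by omega
    have h2 : ((k - m : ℕ) : ℝ) = (k : ℝ) - m := by
      push_cast [Nat.cast_sub hm]; ring
    have key := ih hm
    rw [hkm, Nat.factorial_succ] at key
    have hne : ((k - (m+1) : ℕ) + 1 : ℝ) ≠ 0 := by positivity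
    rw [poch_succ]
    have h3 : ((k - (m+1) : ℕ) : ℝ) + 1 = (k : ℝ) - m := by
      push_cast [Nat.cast_sub h]; ring
    push_cast at key h3 ⊢
    linear_combination (-1)*key + poch (-(k:ℝ)) m * ((k - (m+1)).factorial : ℝ) * h3

lemma summable_ratio {f : ℕ → ℝ} {x b : ℝ} (hx : |x| < 1) (hb : 0 ≤ b)
    (h : ∀ n, 1 ≤ n → |f (n + 1)| ≤ (b + n) * |x| / (n + 1) * |f n|) : Summable f := by
  set r : ℝ := (1 + |x|) / 2 with hr
  have hxx : (0:ℝ) ≤ |x| := abs_nonneg x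
  have hr1 : r < 1 := by rw [hr]; linarith
  have hxr : |x| < r := by rw [hr]; linarith
  obtain ⟨N, hN⟩ := exists_nat_gt (b * |x| / (r - |x|))
  apply summable_of_ratio_norm_eventually_le hr1
  filter_upwards [eventually_ge_atTop (max N 1)] with n hn
  have hn1 : 1 ≤ n := le_of_max_le_right hn
  have hnN : (N : ℝ) ≤ n := by exact_mod_cast le_of_max_le_left hn
  have hnr : b * |x| < n * (r - |x|) := by
    have h5 : b * |x| / (r - |x|) < n := lt_of_lt_of_le hN hnN
    have h2 : (0:ℝ) < r - |x| := by linarith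
    calc b * |x| = b * |x| / (r - |x|) * (r - |x|) := by field_simp
    _ < n * (r - |x|) := by apply mul_lt_mul_of_pos_right h5 h2
  have key : (b + n) * |x| / (n + 1) ≤ r := by
    rw [div_le_iff₀ (by positivity)]
    nlinarith
  calc ‖f (n + 1)‖ = |f (n + 1)| := rfl
    _ ≤ (b + n) * |x| / (n + 1) * |f n| := h n hn1
    _ ≤ r * |f n| := mul_le_mul_of_nonneg_right key (abs_nonneg _)

lemma abs_add_nat (a : ℝ) (n : ℕ) : |a + n| ≤ |a| + n := by
  calc |a + (n:ℝ)| ≤ |a| + |(n:ℝ)| := abs_add_le _ _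
  _ = |a| + n := by rw [Nat.abs_cast]

lemma summable_poch_abs (a : ℝ) {x : ℝ} (hx : |x| < 1) :
    Summable (fun n : ℕ => |poch a n| / n.factorial * |x| ^ n) := by
  apply summable_ratio hx (abs_nonneg a)
  intro n _
  have h1 : (0:ℝ) < (n.factorial : ℝ) := by positivity
  have hps : |poch a (n+1)| = |poch a n| * |a + n| := by rw [poch_succ, abs_mul]
  rw [abs_of_nonneg (by positivity : (0:ℝ) ≤ |poch a n| / n.factorial * |x| ^ n),
      abs_of_nonneg (by positivity : (0:ℝ) ≤ |poch a (n+1)| / (n+1).factorial * |x| ^ (n+1)),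
      hps, Nat.factorial_succ]
  have han := abs_add_nat a n
  push_cast
  have hP : (0:ℝ) ≤ |poch a n| := abs_nonneg _
  have hX : (0:ℝ) ≤ |x| := abs_nonneg x
  have hXn : (0:ℝ) ≤ |x| ^ n := by positivity
  have e1 : |poch a n| * |a + ↑n| / ((↑n + 1) * ↑n.factorial) * |x| ^ (n+1)
      = (|poch a n| * |a + ↑n| * (|x| ^ n * |x|)) / ((↑n + 1) * ↑n.factorial) := by
    rw [pow_succ]; ring
  have e2 : (|a| + ↑n) * |x| / (↑n + 1) * (|poch a n| / ↑n.factorial * |x| ^ n)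
      = ((|a| + ↑n) * |x| * |poch a n| * |x| ^ n) / ((↑n + 1) * ↑n.factorial) := by
    field_simp
  rw [e1, e2, div_le_div_iff_of_pos_right (by positivity)]
  nlinarith [mul_le_mul_of_nonneg_left (mul_le_mul_of_nonneg_right han (mul_nonneg hXn hX)) hP]

lemma summable_poch (a : ℝ) {x : ℝ} (hx : |x| < 1) :
    Summable (fun n : ℕ => poch a n * x ^ n / n.factorial) := by
  apply Summable.of_norm
  apply (summable_poch_abs a hx).congr
  intro n
  rw [Real.norm_eq_abs, abs_div, abs_mul, abs_pow, Nat.abs_cast]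
  ring

lemma summable_poch_deriv (a : ℝ) {r : ℝ} (hr0 : 0 ≤ r) (hr : r < 1) :
    Summable (fun n : ℕ => |poch a n| / n.factorial * (n * r ^ (n - 1))) := by
  have hr' : |r| < 1 := by rwa [abs_of_nonneg hr0]
  apply summable_ratio hr' (by positivity : (0:ℝ) ≤ 2 * |a| + 2)
  intro n hn1
  have h1 : (0:ℝ) < (n.factorial : ℝ) := by positivity
  have hps : |poch a (n+1)| = |poch a n| * |a + n| := by rw [poch_succ, abs_mul]
  have han := abs_add_nat a n
  push_cast
  rw [abs_of_nonneg (by positivity : (0:ℝ) ≤ |poch a n| / n.factorial * (n * r ^ (n-1))),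
      abs_of_nonneg (by positivity : (0:ℝ) ≤ |poch a (n+1)| / (n+1).factorial * (((n:ℝ)+1) * r ^ n)),
      hps, Nat.factorial_succ, abs_of_nonneg hr0]
  have hrpow : r ^ n = r ^ (n - 1) * r := by
    have h6 : n = (n - 1) + 1 := by omega
    nth_rewrite 1 [h6]
    rw [pow_succ]
  rw [hrpow]
  push_cast
  have hP : (0:ℝ) ≤ |poch a n| := abs_nonneg _
  have hRp : (0:ℝ) ≤ r ^ (n-1) := by positivity
  have e1 : |poch a n| * |a + ↑n| / ((↑n + 1) * ↑n.factorial) * ((↑n + 1) * (r ^ (n-1) * r))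
      = (|poch a n| * (|a + ↑n| * (↑n + 1)) * (r ^ (n-1) * r)) / ((↑n + 1) * ↑n.factorial) := by
    field_simp
  have e2 : (2 * |a| + 2 + ↑n) * r / (↑n + 1) * (|poch a n| / ↑n.factorial * (↑n * r ^ (n-1)))
      = (|poch a n| * ((2 * |a| + 2 + ↑n) * ↑n) * (r ^ (n-1) * r)) / ((↑n + 1) * ↑n.factorial) := by
    field_simp
  rw [e1, e2, div_le_div_iff_of_pos_right (by positivity)]
  have hn1' : (1:ℝ) ≤ n := by exact_mod_cast hn1
  have h3 : |a + ↑n| * (↑n + 1) ≤ (2 * |a| + 2 + ↑n) * ↑n := by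
    nlinarith [mul_le_mul_of_nonneg_right han (by linarith : (0:ℝ) ≤ (n:ℝ)+1), mul_nonneg (abs_nonneg a) (by linarith : (0:ℝ) ≤ (n:ℝ)-1)]
  nlinarith [mul_le_mul_of_nonneg_right (mul_le_mul_of_nonneg_left h3 hP) (mul_nonneg hRp hr0)]

lemma hasSum_shiftF (a : ℝ) {x : ℝ} (hx : |x| < 1) :
    HasSum (fun n : ℕ => poch a n * x ^ n / n.factorial)
      ((1 - x) * ∑' n : ℕ, poch (a + 1) n * x ^ n / n.factorial) := by
  set t : ℕ → ℝ := fun n => poch (a + 1) n * x ^ n / n.factorial with ht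
  have hT : HasSum t (∑' n, t n) := (summable_poch (a + 1) hx).hasSum
  have hu : HasSum (fun n => x * t n) (x * ∑' n, t n) := hT.mul_left x
  set g : ℕ → ℝ := fun n => Nat.rec 0 (fun m _ => x * t m) n with hgdef
  have hg1 : HasSum (fun n => g (n + 1)) (x * ∑' n, t n) := hu
  have hg : HasSum g (x * ∑' n, t n) := by
    have := (hasSum_nat_add_iff (f := g) 1).mp hg1
    simpa [hgdef] using this
  have hsub := hT.sub hg
  have heq : ∀ n, t n - g n = poch a n * x ^ n / n.factorial := by
    intro n
    cases n with
    | zero => simp [ht, hgdef, poch_zero]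
    | succ n =>
      show t (n + 1) - x * t n = _
      rw [ht]
      simp only
      rw [poch_succ, poch_succ_left a n, Nat.factorial_succ]
      have h1 : ((n:ℝ) + 1) ≠ 0 := by positivity
      have h2 : ((n.factorial :ℕ) : ℝ) ≠ 0 := by positivity
      push_cast
      field_simp
      ring
  have : HasSum (fun n => poch a n * x ^ n / n.factorial) (∑' n, t n - x * ∑' n, t n) :=
    hsub.congr_fun (fun n => (heq n).symm)
  convert this using 1
  ring

lemma F_hasDerivAt (a : ℝ) {y : ℝ} (hy : |y| < 1) :
    HasDerivAt (fun z => ∑' n : ℕ, poch a n * z ^ n / n.factorial)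
      (a * ∑' n : ℕ, poch (a + 1) n * y ^ n / n.factorial) y := by
  set r : ℝ := (1 + |y|) / 2 with hrdef
  have hy0 : (0:ℝ) ≤ |y| := abs_nonneg y
  have hr0 : (0:ℝ) ≤ r := by rw [hrdef]; linarith
  have hr1 : r < 1 := by rw [hrdef]; linarith
  have hyr : |y| < r := by rw [hrdef]; linarith
  set g : ℕ → ℝ → ℝ := fun n z => poch a n / n.factorial * z ^ n with hgdef
  set g' : ℕ → ℝ → ℝ := fun n z => poch a n / n.factorial * (n * z ^ (n - 1)) with hg'def
  set u : ℕ → ℝ := fun n => |poch a n| / n.factorial * (n * r ^ (n - 1)) with hudef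
  have hu : Summable u := summable_poch_deriv a hr0 hr1
  have hmem : y ∈ Set.Ioo (-r) r := by
    exact abs_lt.mp hyr
  have hgd : ∀ n z, z ∈ Set.Ioo (-r) r → HasDerivAt (g n) (g' n z) z := by
    intro n z _
    exact (hasDerivAt_pow n z).const_mul (poch a n / n.factorial)
  have hbound : ∀ n z, z ∈ Set.Ioo (-r) r → ‖g' n z‖ ≤ u n := by
    intro n z hz
    have hzr : |z| ≤ r := le_of_lt (abs_lt.mpr ⟨hz.1, hz.2⟩)
    rw [hg'def, hudef]
    simp only [Real.norm_eq_abs, abs_mul, abs_div, Nat.abs_cast, abs_pow]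
    apply mul_le_mul_of_nonneg_left _ (by positivity)
    apply mul_le_mul_of_nonneg_left _ (Nat.cast_nonneg n)
    exact pow_le_pow_left₀ (abs_nonneg z) hzr _
  have hg0 : Summable (fun n => g n y) := by
    apply (summable_poch a hy).congr
    intro n; rw [hgdef]; simp only; ring
  have key := hasDerivAt_tsum_of_isPreconnected hu isOpen_Ioo (convex_Ioo (-r) r).isPreconnected
    hgd hbound hmem hg0 hmem
  have hsum' : Summable (fun n => g' n y) := by
    apply Summable.of_norm_bounded hu
    intro n; exact hbound n y hmem
  have hval : ∑' n, g' n y = a * ∑' n : ℕ, poch (a + 1) n * y ^ n / n.factorial := by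
    rw [Summable.tsum_eq_zero_add hsum']
    have h0 : g' 0 y = 0 := by simp [hg'def]
    rw [h0, zero_add]
    have h1 : ∀ n : ℕ, g' (n + 1) y = a * (poch (a + 1) n * y ^ n / n.factorial) := by
      intro n
      rw [hg'def]
      simp only [Nat.add_sub_cancel]
      rw [poch_succ_left, Nat.factorial_succ]
      have h2 : ((n:ℝ) + 1) ≠ 0 := by positivity
      have h3 : ((n.factorial :ℕ) : ℝ) ≠ 0 := by positivity
      push_cast
      field_simp
    rw [tsum_congr h1, tsum_mul_left]
  rw [hval] at key
  have hfun : (fun z => ∑' n, g n z) = fun z => ∑' n : ℕ, poch a n * z ^ n / n.factorial := by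
    funext z
    apply tsum_congr
    intro n; rw [hgdef]; simp only; ring
  rwa [hfun] at key

lemma hasSum_binomial (a : ℝ) {x : ℝ} (hx : |x| < 1) :
    HasSum (fun n : ℕ => poch a n * x ^ n / n.factorial) ((1 - x) ^ (-a) : ℝ) := by
  set Fa : ℝ → ℝ := fun z => ∑' n : ℕ, poch a n * z ^ n / n.factorial with hFa
  set G : ℝ → ℝ := fun z => Fa z * (1 - z) ^ a with hG
  have hx1 : -1 < x := (abs_lt.mp hx).1
  have hx2 : x < 1 := (abs_lt.mp hx).2
  have hderiv : ∀ z ∈ Set.Ioo (-1 : ℝ) 1, HasDerivAt G 0 z := by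
    intro z hz
    have hz' : |z| < 1 := abs_lt.mpr ⟨hz.1, hz.2⟩
    have h1z : (0:ℝ) < 1 - z := by linarith [hz.2]
    have h1 := F_hasDerivAt a hz'
    have hbase : HasDerivAt (fun z : ℝ => 1 - z) (-1) z := by
      simpa using (hasDerivAt_id z).const_sub 1
    have h2 : HasDerivAt (fun z : ℝ => (1 - z) ^ a) ((-1) * a * (1 - z) ^ (a - 1)) z :=
      hbase.rpow_const (Or.inl (ne_of_gt h1z))
    have h3 := h1.mul h2
    have hshift : Fa z = (1 - z) * ∑' n : ℕ, poch (a + 1) n * z ^ n / n.factorial :=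
      (hasSum_shiftF a hz').tsum_eq
    have hpow : (1 - z) ^ a = (1 - z) ^ (a - 1) * (1 - z) := by
      have h4 : a = (a - 1) + 1 := by ring
      nth_rewrite 1 [h4]
      rw [Real.rpow_add_one (ne_of_gt h1z)]
    convert h3 using 1
    case e'_4 => rfl
    case e'_5 => rfl
    case e'_8 => rfl
    rw [hpow, show (∑' (n : ℕ), poch a n * z ^ n / (n.factorial:ℝ))
        = (1 - z) * ∑' (n : ℕ), poch (a + 1) n * z ^ n / (n.factorial:ℝ) from hshift]
    ring
  have hcont : ∀ s : Set ℝ, s ⊆ Set.Ioo (-1:ℝ) 1 → ContinuousOn G s := by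
    intro s hs
    intro z hz
    exact ((hderiv z (hs hz)).continuousAt).continuousWithinAt
  have hG0 : G 0 = 1 := by
    rw [hG]
    simp only
    have hFa0 : Fa 0 = 1 := by
      rw [hFa]
      simp only
      rw [tsum_eq_single 0 (fun b hb => by simp [zero_pow hb])]
      simp [poch_zero]
    rw [hFa0, sub_zero, Real.one_rpow, one_mul]
  have hGx : G x = 1 := by
    rcases le_or_gt 0 x with h0 | h0
    · have hIcc : Set.Icc (0:ℝ) x ⊆ Set.Ioo (-1:ℝ) 1 := fun w hw =>
        ⟨by linarith [hw.1], by linarith [hw.2]⟩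
      have := constant_of_has_deriv_right_zero (hcont _ hIcc)
        (fun w hw => ((hderiv w (hIcc (Set.mem_Icc.mpr ⟨hw.1, le_of_lt hw.2⟩))).hasDerivWithinAt))
        x (Set.mem_Icc.mpr ⟨h0, le_refl x⟩)
      rw [this, hG0]
    · have hIcc : Set.Icc x (0:ℝ) ⊆ Set.Ioo (-1:ℝ) 1 := fun w hw =>
        ⟨by linarith [hw.1], by linarith [hw.2]⟩
      have := constant_of_has_deriv_right_zero (hcont _ hIcc)
        (fun w hw => ((hderiv w (hIcc (Set.mem_Icc.mpr ⟨hw.1, le_of_lt hw.2⟩))).hasDerivWithinAt))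
        0 (Set.mem_Icc.mpr ⟨le_of_lt h0, le_refl 0⟩)
      rw [hG0] at this
      exact this.symm
  have h1x : (0:ℝ) < 1 - x := by linarith
  have hFax : Fa x = (1 - x) ^ (-a) := by
    rw [Real.rpow_neg (le_of_lt h1x)]
    exact eq_inv_of_mul_eq_one_left hGx
  have := (summable_poch a hx).hasSum
  rwa [show ∑' n : ℕ, poch a n * x ^ n / n.factorial = Fa x from rfl, hFax] at this

lemma hasSum_even (a : ℝ) {x : ℝ} (hx : |x| < 1) :
    HasSum (fun k : ℕ => poch a (2 * k) * x ^ (2 * k) / (2 * k).factorial)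
      (((1 - x) ^ (-a) + (1 + x) ^ (-a)) / 2 : ℝ) := by
  set f : ℕ → ℝ := fun n => poch a n * x ^ n / n.factorial with hf
  have h₁ : HasSum f ((1 - x) ^ (-a)) := hasSum_binomial a hx
  have hx' : |(-x)| < 1 := by rwa [abs_neg]
  have h₂ : HasSum (fun n => poch a n * (-x) ^ n / n.factorial) ((1 + x) ^ (-a)) := by
    have := hasSum_binomial a hx'
    rwa [sub_neg_eq_add] at this
  have hinj : Function.Injective (fun k : ℕ => 2 * k) := fun a b h => by simp only at h; omega
  have hinj' : Function.Injective (fun k : ℕ => 2 * k + 1) := fun a b h => by simp only at h; omega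
  have He : Summable (fun k => f (2 * k)) := h₁.summable.comp_injective hinj
  have Ho : Summable (fun k => f (2 * k + 1)) := h₁.summable.comp_injective hinj'
  set E := ∑' k, f (2 * k) with hE
  set O := ∑' k, f (2 * k + 1) with hO
  have hEO : HasSum f (E + O) := HasSum.even_add_odd He.hasSum Ho.hasSum
  have hv1 : E + O = (1 - x) ^ (-a) := hEO.unique h₁
  have He2 : HasSum (fun k => poch a (2*k) * (-x) ^ (2*k) / (2*k).factorial) E := by
    apply He.hasSum.congr_fun
    intro k
    rw [hf]
    simp only
    rw [Even.neg_pow (even_two_mul k)]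
  have Ho2 : HasSum (fun k => poch a (2*k+1) * (-x) ^ (2*k+1) / (2*k+1).factorial) (-O) := by
    apply Ho.hasSum.neg.congr_fun
    intro k
    rw [hf]
    simp only
    rw [Odd.neg_pow (odd_two_mul_add_one k)]
    ring
  have hEO2 : HasSum (fun n => poch a n * (-x) ^ n / n.factorial) (E + -O) :=
    HasSum.even_add_odd He2 Ho2
  have hv2 : E + -O = (1 + x) ^ (-a) := hEO2.unique h₂
  have : E = ((1 - x) ^ (-a) + (1 + x) ^ (-a)) / 2 := by linarith
  rw [← this]
  exact He.hasSum

lemma term_eq (d y x c : ℝ) (m k : ℕ) :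
    (poch d (m+k) * poch (d + 1/2) (m+k) / (poch (1/2) (m+k) * (m+k).factorial)) * x ^ (2 * (m+k))
      * (c * poch (-((m+k : ℕ) : ℝ)) m * poch (-((m+k : ℕ) : ℝ) + 1/2) m / m.factorial * y ^ m)
    = (c * y ^ m * x ^ (2*m) * poch (2*d) (2*m) / (4 ^ m * m.factorial))
      * (poch (2*d + 2*m) (2*k) * x ^ (2*k) / (2*k).factorial) := by
  set n := m + k with hn
  have h4n : (0:ℝ) < 4 ^ n := by positivity
  have h4m : (0:ℝ) < 4 ^ m := by positivity
  have hfn : (0:ℝ) < (n.factorial : ℝ) := by positivity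
  have hfm : (0:ℝ) < (m.factorial : ℝ) := by positivity
  have hf2n : (0:ℝ) < ((2*n).factorial : ℝ) := by positivity
  have hf2k : (0:ℝ) < ((2*k).factorial : ℝ) := by positivity
  have hph : (0:ℝ) < poch (1/2) n := poch_pos (by norm_num) n
  have E1 : poch d n * poch (d + 1/2) n = poch (2*d) (2*n) / 4 ^ n := by
    rw [eq_div_iff (ne_of_gt h4n)]
    linear_combination poch_dup d n
  have E2 : poch (1/2 : ℝ) n * (n.factorial : ℝ) = ((2*n).factorial : ℝ) / 4 ^ n := by
    rw [eq_div_iff (ne_of_gt h4n)]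
    have := poch_dup (1/2 : ℝ) n
    rw [show (1:ℝ)/2 + 1/2 = 1 by norm_num, show (2:ℝ) * (1/2) = 1 by norm_num,
        poch_one, poch_one] at this
    linear_combination this
  have E3 : poch (-(n:ℝ)) m * poch (-(n:ℝ) + 1/2) m
      = ((2*n).factorial : ℝ) / (((2*k).factorial : ℝ) * 4 ^ m) := by
    rw [eq_div_iff (by positivity)]
    have hdup := poch_dup (-(n:ℝ)) m
    have hcast : (2 : ℝ) * -(n:ℝ) = -(((2*n : ℕ)) : ℝ) := by push_cast; ring
    rw [hcast] at hdup
    have hfac := poch_neg (k := 2*n) (m := 2*m) (by omega)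
    have h2n2m : 2*n - 2*m = 2*k := by omega
    have hsign : ((-1:ℝ)) ^ (2*m) = 1 := by rw [pow_mul]; norm_num
    rw [h2n2m, hsign, one_mul] at hfac
    have h4mne : (4:ℝ) ^ m ≠ 0 := ne_of_gt h4m
    -- poch(-n) m * poch(-n+1/2) m * ((2k)! * 4^m) = (2n)!
    -- hdup : 4^m * poch(-n) m * poch(-n+1/2) m = poch (-(2n)) (2m)
    -- hfac : poch (-(2n)) (2m) * (2k)! = (2n)!
    linear_combination ((2*k).factorial : ℝ) * hdup + hfac
  have E4 : poch (2*d) (2*n) = poch (2*d) (2*m) * poch (2*d + 2*m) (2*k) := by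
    have := poch_add (2*d) (2*m) (2*k)
    rw [show 2*m + 2*k = 2*n by omega] at this
    rw [this, show ((2*m : ℕ) : ℝ) = 2*(m:ℝ) by push_cast; ring]
  have E5 : x ^ (2*n) = x ^ (2*m) * x ^ (2*k) := by
    rw [← pow_add]
    congr 1
    omega
  rw [E1, E2, show c * poch (-(n:ℝ)) m * poch (-(n:ℝ) + 1/2) m
      = c * (poch (-(n:ℝ)) m * poch (-(n:ℝ) + 1/2) m) by ring, E3, E4, E5]
  field_simp

lemma hasSum_key (d y : ℝ) {x : ℝ} (hx : |x| < 1) (c : ℝ) (m : ℕ) :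
    HasSum (fun n : ℕ => (poch d n * poch (d + 1/2) n / (poch (1/2) n * n.factorial)) * x ^ (2 * n)
        * (c * poch (-(n : ℝ)) m * poch (-(n : ℝ) + 1/2) m / m.factorial * y ^ m))
      ((1/2) * (1 + x) ^ (-(2 * d))
          * (c * poch d m * poch (d + 1/2) m / m.factorial * (x ^ 2 * y / (1 + x) ^ 2) ^ m)
        + (1/2) * (1 - x) ^ (-(2 * d))
          * (c * poch d m * poch (d + 1/2) m / m.factorial * (x ^ 2 * y / (1 - x) ^ 2) ^ m)) := by
  have hx1 : -1 < x := (abs_lt.mp hx).1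
  have hx2 : x < 1 := (abs_lt.mp hx).2
  have h1p : (0:ℝ) < 1 + x := by linarith
  have h1m : (0:ℝ) < 1 - x := by linarith
  set f : ℕ → ℝ := fun n => (poch d n * poch (d + 1/2) n / (poch (1/2) n * n.factorial)) * x ^ (2 * n)
        * (c * poch (-(n : ℝ)) m * poch (-(n : ℝ) + 1/2) m / m.factorial * y ^ m) with hfdef
  set C : ℝ := c * y ^ m * x ^ (2*m) * poch (2*d) (2*m) / (4 ^ m * m.factorial) with hC
  have hE := (hasSum_even (2*d + 2*(m:ℝ)) hx).mul_left C
  have h2 : HasSum (fun k => f (k + m))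
      (C * (((1 - x) ^ (-(2*d + 2*(m:ℝ))) + (1 + x) ^ (-(2*d + 2*(m:ℝ)))) / 2)) := by
    apply hE.congr_fun
    intro k
    rw [show k + m = m + k from Nat.add_comm k m]
    simp only [hfdef, hC]
    exact term_eq d y x c m k
  have h3 := (hasSum_nat_add_iff (f := f) m).mp h2
  have hhead : ∑ i ∈ range m, f i = 0 := by
    apply Finset.sum_eq_zero
    intro i hi
    have him : i < m := mem_range.mp hi
    rw [hfdef]
    simp only
    rw [poch_neg_eq_zero him]
    ring
  rw [hhead, add_zero] at h3
  convert h3 using 1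
  case e'_3 => rfl
  have ep : (1 + x) ^ (-(2*d + 2*(m:ℝ))) = (1 + x) ^ (-(2*d)) * (((1+x)^2)^m)⁻¹ := by
    rw [show -(2*d + 2*(m:ℝ)) = -(2*d) + -(((2*m : ℕ)):ℝ) by push_cast; ring]
    rw [Real.rpow_add h1p, Real.rpow_neg h1p.le, Real.rpow_neg h1p.le, Real.rpow_natCast, pow_mul]
  have em : (1 - x) ^ (-(2*d + 2*(m:ℝ))) = (1 - x) ^ (-(2*d)) * (((1-x)^2)^m)⁻¹ := by
    rw [show -(2*d + 2*(m:ℝ)) = -(2*d) + -(((2*m : ℕ)):ℝ) by push_cast; ring]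
    rw [Real.rpow_add h1m, Real.rpow_neg h1m.le, Real.rpow_neg h1m.le, Real.rpow_natCast, pow_mul]
  have hpp : (x ^ 2 * y / (1 + x) ^ 2) ^ m = x ^ (2*m) * y ^ m * (((1+x)^2)^m)⁻¹ := by
    rw [div_pow, div_eq_mul_inv, mul_pow, ← pow_mul, mul_comm 2 m]
  have hpm : (x ^ 2 * y / (1 - x) ^ 2) ^ m = x ^ (2*m) * y ^ m * (((1-x)^2)^m)⁻¹ := by
    rw [div_pow, div_eq_mul_inv, mul_pow, ← pow_mul, mul_comm 2 m]
  have hdup : poch (2*d) (2*m) = 4 ^ m * (poch d m * poch (d + 1/2) m) := by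
    rw [← poch_dup d m]; ring
  rw [ep, em, hpp, hpm, hC, hdup]
  have h4m : (4:ℝ) ^ m ≠ 0 := by positivity
  have hfm : ((m.factorial : ℕ) : ℝ) ≠ 0 := by positivity
  field_simp
  ring

end ExtonAux

/-- Exton's generating relation (with `(A_m)` eventually zero to ensure convergence). -/
theorem stmt9 (d y : ℝ) (A : ℕ → ℝ) (hA : ∃ N, ∀ m, N ≤ m → A m = 0)
    (x : ℝ) (hx : |x| < 1) :
    ∑' n : ℕ, (poch d n * poch (d + 1/2) n / (poch (1/2) n * n.factorial)) * x ^ (2 * n)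
        * ∑ m ∈ range (n + 1),
            A m * poch (-(n : ℝ)) m * poch (-(n : ℝ) + 1/2) m / m.factorial * y ^ m
      = (1/2) * (1 + x) ^ (-(2 * d))
          * ∑' n : ℕ, A n * poch d n * poch (d + 1/2) n / n.factorial
              * (x ^ 2 * y / (1 + x) ^ 2) ^ n
        + (1/2) * (1 - x) ^ (-(2 * d))
          * ∑' n : ℕ, A n * poch d n * poch (d + 1/2) n / n.factorial
              * (x ^ 2 * y / (1 - x) ^ 2) ^ n := by
  obtain ⟨N, hN⟩ := hA
  have hkey : ∀ m : ℕ, HasSum (fun n : ℕ =>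
      (poch d n * poch (d + 1/2) n / (poch (1/2) n * n.factorial)) * x ^ (2 * n)
        * (A m * poch (-(n : ℝ)) m * poch (-(n : ℝ) + 1/2) m / m.factorial * y ^ m))
      ((1/2) * (1 + x) ^ (-(2 * d))
          * (A m * poch d m * poch (d + 1/2) m / m.factorial * (x ^ 2 * y / (1 + x) ^ 2) ^ m)
        + (1/2) * (1 - x) ^ (-(2 * d))
          * (A m * poch d m * poch (d + 1/2) m / m.factorial * (x ^ 2 * y / (1 - x) ^ 2) ^ m)) :=
    fun m => hasSum_key d y hx (A m) m
  -- Step 1 : extend inner finite sum to range N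
  have hinner : ∀ n : ℕ, ∑ m ∈ range (n + 1),
        A m * poch (-(n : ℝ)) m * poch (-(n : ℝ) + 1/2) m / m.factorial * y ^ m
      = ∑ m ∈ range N,
        A m * poch (-(n : ℝ)) m * poch (-(n : ℝ) + 1/2) m / m.factorial * y ^ m := by
    intro n
    have h1 : ∑ m ∈ range (n + 1),
          A m * poch (-(n : ℝ)) m * poch (-(n : ℝ) + 1/2) m / m.factorial * y ^ m
        = ∑ m ∈ range (max (n + 1) N),
          A m * poch (-(n : ℝ)) m * poch (-(n : ℝ) + 1/2) m / m.factorial * y ^ m := by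
      apply Finset.sum_subset (range_subset_range.mpr (le_max_left _ _))
      intro m _ hm
      rw [Finset.mem_range, not_lt] at hm
      rw [poch_neg_eq_zero (by omega : n < m)]
      ring
    have h2 : ∑ m ∈ range N,
          A m * poch (-(n : ℝ)) m * poch (-(n : ℝ) + 1/2) m / m.factorial * y ^ m
        = ∑ m ∈ range (max (n + 1) N),
          A m * poch (-(n : ℝ)) m * poch (-(n : ℝ) + 1/2) m / m.factorial * y ^ m := by
      apply Finset.sum_subset (range_subset_range.mpr (le_max_right _ _))
      intro m _ hm
      rw [Finset.mem_range, not_lt] at hm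
      rw [hN m hm]
      ring
    rw [h1, ← h2]
  have hLHS : ∑' n : ℕ, (poch d n * poch (d + 1/2) n / (poch (1/2) n * n.factorial)) * x ^ (2 * n)
        * ∑ m ∈ range (n + 1),
            A m * poch (-(n : ℝ)) m * poch (-(n : ℝ) + 1/2) m / m.factorial * y ^ m
      = ∑ m ∈ range N, ∑' n : ℕ,
          (poch d n * poch (d + 1/2) n / (poch (1/2) n * n.factorial)) * x ^ (2 * n)
            * (A m * poch (-(n : ℝ)) m * poch (-(n : ℝ) + 1/2) m / m.factorial * y ^ m) := by
    rw [← Summable.tsum_finsetSum (fun m _ => (hkey m).summable)]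
    apply tsum_congr
    intro n
    rw [hinner n, mul_sum]
  rw [hLHS]
  have hT1 : ∑' n : ℕ, A n * poch d n * poch (d + 1/2) n / n.factorial
              * (x ^ 2 * y / (1 + x) ^ 2) ^ n
      = ∑ n ∈ range N, A n * poch d n * poch (d + 1/2) n / n.factorial
              * (x ^ 2 * y / (1 + x) ^ 2) ^ n := by
    apply tsum_eq_sum
    intro b hb
    rw [hN b (by simpa using hb)]
    ring
  have hT2 : ∑' n : ℕ, A n * poch d n * poch (d + 1/2) n / n.factorial
              * (x ^ 2 * y / (1 - x) ^ 2) ^ n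
      = ∑ n ∈ range N, A n * poch d n * poch (d + 1/2) n / n.factorial
              * (x ^ 2 * y / (1 - x) ^ 2) ^ n := by
    apply tsum_eq_sum
    intro b hb
    rw [hN b (by simpa using hb)]
    ring
  rw [hT1, hT2, mul_sum, mul_sum, ← sum_add_distrib]
  exact Finset.sum_congr rfl fun m _ => (hkey m).tsum_eq
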